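/- If R ∈ SO(p)ⁿ and Λ is a symmetric p×p-block-diagonal matrix such that ÃR = ΛR (the first-order KKT condition) and Λ − Ã ⪰ 0, then R is a global minimizer of the rotation averaging problem minimize −⟨RRᵀ, Ã⟩ over SO(p)ⁿ, and the duality gap with the dual SDP maximize −Tr(Λ) subject to Λ − Ã ⪰ 0 is zero. -/

import Mathlib

open Matrix

/-- The `(i,j)` block of an `np × np` block matrix. -/
def blk {n p : ℕ} (M : Matrix (Fin n × Fin p) (Fin n × Fin p) ℝ) (i j : Fin n) :
    Matrix (Fin p) (Fin p) ℝ := fun a b => M (i, a) (j, b)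

/-- The `i`-th `p × p` block of a stacked `np × p` block column matrix. -/
def blkv {n p : ℕ} (R : Matrix (Fin n × Fin p) (Fin p) ℝ) (i : Fin n) :
    Matrix (Fin p) (Fin p) ℝ := fun a b => R (i, a) b

lemma trace_mul_blockdiag {n p : ℕ}
    (Λ B : Matrix (Fin n × Fin p) (Fin n × Fin p) ℝ)
    (hΛdiag : ∀ i j : Fin n, i ≠ j → blk Λ i j = 0) :
    (Λ * B).trace = ∑ i : Fin n, ((blk Λ i i) * (blk B i i)).trace := by
  simp only [Matrix.trace, Matrix.diag, Matrix.mul_apply, Fintype.sum_prod_type, blk]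
  refine Finset.sum_congr rfl fun i _ => Finset.sum_congr rfl fun a _ => ?_
  rw [Finset.sum_comm]
  refine Finset.sum_congr rfl fun b _ => ?_
  rw [Finset.sum_eq_single i]
  · intro j _ hj
    have := congrFun (congrFun (hΛdiag i j hj.symm) a) b
    simp [blk] at this
    simp [this]
  · simp

lemma blkv_mul_self {n p : ℕ} (S : Matrix (Fin n × Fin p) (Fin p) ℝ)
    (i : Fin n) (h : (blkv S i)ᵀ * blkv S i = 1) :
    blkv S i * (blkv S i)ᵀ = 1 :=
  mul_eq_one_comm.mp h

lemma blk_mul_transpose {n p : ℕ} (S : Matrix (Fin n × Fin p) (Fin p) ℝ)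
    (i : Fin n) : blk (S * Sᵀ) i i = blkv S i * (blkv S i)ᵀ := by
  ext a b
  simp [blk, blkv, Matrix.mul_apply, Matrix.transpose_apply]

lemma trace_nonneg_of_psd {m : Type*} [Fintype m] [DecidableEq m]
    (M : Matrix m m ℝ) (h : M.PosSemidef) : 0 ≤ M.trace := by
  rw [Matrix.trace]
  apply Finset.sum_nonneg
  intro c _
  have := h.diag_nonneg (i := c)
  simpa [dotProduct, Matrix.mulVec, Pi.single_apply, Matrix.diag,
    Finset.mul_sum] using this

lemma key {n p : ℕ} (Λ : Matrix (Fin n × Fin p) (Fin n × Fin p) ℝ)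
    (hΛdiag : ∀ i j : Fin n, i ≠ j → blk Λ i j = 0)
    (S : Matrix (Fin n × Fin p) (Fin p) ℝ)
    (hS : ∀ i, (blkv S i)ᵀ * blkv S i = 1) :
    (Sᵀ * Λ * S).trace = Λ.trace := by
  have h1 : (Sᵀ * Λ * S).trace = (Λ * (S * Sᵀ)).trace := by
    rw [Matrix.trace_mul_comm, ← Matrix.mul_assoc, Matrix.trace_mul_comm]
  rw [h1, trace_mul_blockdiag Λ _ hΛdiag]
  have : ∀ i : Fin n, blk (S * Sᵀ) i i = 1 := fun i => by
    rw [blk_mul_transpose, blkv_mul_self S i (hS i)]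
  simp only [this, Matrix.mul_one]
  simp [Matrix.trace, Matrix.diag, Fintype.sum_prod_type, blk]

theorem stmt3 {n p : ℕ}
    (A Λ : Matrix (Fin n × Fin p) (Fin n × Fin p) ℝ)
    (hA : Aᵀ = A) (hAdiag : ∀ i : Fin n, blk A i i = 0)
    (hΛsym : Λᵀ = Λ) (hΛdiag : ∀ i j : Fin n, i ≠ j → blk Λ i j = 0)
    (R : Matrix (Fin n × Fin p) (Fin p) ℝ)
    (hR : ∀ i : Fin n, (blkv R i)ᵀ * blkv R i = 1 ∧ (blkv R i).det = 1)
    (hKKT : A * R = Λ * R)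
    (hPSD : (Λ - A).PosSemidef) :
    (∀ Q : Matrix (Fin n × Fin p) (Fin p) ℝ,
        (∀ i : Fin n, (blkv Q i)ᵀ * blkv Q i = 1 ∧ (blkv Q i).det = 1) →
        -(Rᵀ * A * R).trace ≤ -(Qᵀ * A * Q).trace) ∧
      -(Rᵀ * A * R).trace = -Λ.trace := by
  have hRtr : (Rᵀ * A * R).trace = Λ.trace := by
    rw [Matrix.mul_assoc, hKKT, ← Matrix.mul_assoc]
    exact key Λ hΛdiag R (fun i => (hR i).1)
  refine ⟨fun Q hQ => ?_, by rw [hRtr]⟩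
  have hQtr : (Qᵀ * Λ * Q).trace = Λ.trace := key Λ hΛdiag Q (fun i => (hQ i).1)
  have hpsd : (Qᵀ * (Λ - A) * Q).PosSemidef := by
    have := hPSD.conjTranspose_mul_mul_same Q
    simpa using this
  have htr : 0 ≤ (Qᵀ * (Λ - A) * Q).trace := trace_nonneg_of_psd _ hpsd
  have hexp : (Qᵀ * (Λ - A) * Q).trace = Λ.trace - (Qᵀ * A * Q).trace := by
    rw [Matrix.mul_sub, Matrix.sub_mul, Matrix.trace_sub, hQtr]
  rw [hRtr]
  linarith [htr, hexp ▸ htr]
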